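/- Let G be a group, N a normal subgroup, q : G → G/N the projection. Let f₁,…,f_k, g₁,…,g_k, α₁,…,α_k, β₁,…,β_k ∈ G with q(f_i) = q(α_i) and q(g_i) = q(β_i) for each i. Then the element [f₁,g₁]⋯[f_k,g_k]·([α₁,β₁]⋯[α_k,β_k])⁻¹ lies in [G,N], and its (G,N)-commutator length is at most 3k. -/

import Mathlib

open scoped commutatorElement

variable {G : Type*} [Group G]

/-- `x` is a product of `m` `(G,N)`-commutators. -/
def IsCommProd (N : Subgroup G) (m : ℕ) (x : G) : Prop :=
  ∃ c : Fin m → G, (∀ i, ∃ g h : G, h ∈ N ∧ c i = g * h * g⁻¹ * h⁻¹) ∧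
    (List.ofFn c).prod = x

/-- The `(G,N)`-commutator length. -/
noncomputable def clGN (N : Subgroup G) (x : G) : ℕ :=
  sInf {m | IsCommProd N m x}

lemma isCommProd_iff_list (N : Subgroup G) (m : ℕ) (x : G) :
    IsCommProd N m x ↔ ∃ l : List G, l.length = m ∧
      (∀ y ∈ l, ∃ g h : G, h ∈ N ∧ y = g * h * g⁻¹ * h⁻¹) ∧ l.prod = x := by
  constructor
  · rintro ⟨c, hc, hp⟩
    refine ⟨List.ofFn c, List.length_ofFn, ?_, hp⟩
    intro y hy
    rw [List.mem_ofFn] at hy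
    obtain ⟨i, rfl⟩ := hy
    exact hc i
  · rintro ⟨l, rfl, hmem, hprod⟩
    exact ⟨l.get, fun i => hmem _ (l.get_mem i), by rw [List.ofFn_get]; exact hprod⟩

lemma IsCommProd.mul {N : Subgroup G} {m m' : ℕ} {x x' : G}
    (h : IsCommProd N m x) (h' : IsCommProd N m' x') :
    IsCommProd N (m + m') (x * x') := by
  rw [isCommProd_iff_list] at h h' ⊢
  obtain ⟨l, hl, hm, hp⟩ := h
  obtain ⟨l', hl', hm', hp'⟩ := h'
  refine ⟨l ++ l', by simp [hl, hl'], ?_, by simp [hp, hp']⟩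
  intro y hy
  rcases List.mem_append.mp hy with hy | hy
  exacts [hm y hy, hm' y hy]

lemma IsCommProd.conj {N : Subgroup G} [hN : N.Normal] {m : ℕ} {x : G}
    (h : IsCommProd N m x) (a : G) : IsCommProd N m (a * x * a⁻¹) := by
  rw [isCommProd_iff_list] at h ⊢
  obtain ⟨l, hl, hm, hp⟩ := h
  refine ⟨l.map (fun y => a * y * a⁻¹), by simp [hl], ?_, ?_⟩
  · intro y hy
    rw [List.mem_map] at hy
    obtain ⟨z, hz, rfl⟩ := hy
    obtain ⟨g, n, hn, rfl⟩ := hm z hz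
    exact ⟨a * g * a⁻¹, a * n * a⁻¹, hN.conj_mem n hn a, by group⟩
  · rw [← hp]
    have hmap : l.map (fun y => a * y * a⁻¹) = l.map (MulAut.conj a) := by
      simp [MulAut.conj_apply]
    rw [hmap, ← map_list_prod (MulAut.conj a) l, MulAut.conj_apply]

lemma IsCommProd.mem_commutator {N : Subgroup G} {m : ℕ} {x : G}
    (h : IsCommProd N m x) : x ∈ ⁅(⊤ : Subgroup G), N⁆ := by
  rw [isCommProd_iff_list] at h
  obtain ⟨l, hl, hm, rfl⟩ := h
  refine Subgroup.list_prod_mem _ (fun y hy => ?_)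
  obtain ⟨g, n, hn, rfl⟩ := hm y hy
  have := Subgroup.commutator_mem_commutator (Subgroup.mem_top g) hn
  rwa [commutatorElement_def] at this

lemma key1 {N : Subgroup G} [hN : N.Normal] (a b h₁ h₂ : G)
    (hh₁ : h₁ ∈ N) (hh₂ : h₂ ∈ N) :
    IsCommProd N 3 (⁅a * h₁, b * h₂⁆ * ⁅a, b⁆⁻¹) := by
  rw [isCommProd_iff_list]
  refine ⟨[(a*b) * (b⁻¹ * h₁ * b * h₁⁻¹) * (a*b)⁻¹,
           (a*b) * (h₁ * h₂ * h₁⁻¹ * h₂⁻¹) * (a*b)⁻¹,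
           (a*b) * (h₂ * a⁻¹ * h₂⁻¹ * a) * (a*b)⁻¹], rfl, ?_, ?_⟩
  · intro y hy
    simp only [List.mem_cons, List.not_mem_nil, or_false] at hy
    rcases hy with rfl | rfl | rfl
    · exact ⟨(a*b) * b⁻¹ * (a*b)⁻¹, (a*b) * h₁ * (a*b)⁻¹, hN.conj_mem h₁ hh₁ _, by group⟩
    · exact ⟨(a*b) * h₁ * (a*b)⁻¹, (a*b) * h₂ * (a*b)⁻¹, hN.conj_mem h₂ hh₂ _, by group⟩
    · exact ⟨(a*b) * (h₂ * a⁻¹) * (a*b)⁻¹, (a*b) * h₂⁻¹ * (a*b)⁻¹,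
        hN.conj_mem h₂⁻¹ (N.inv_mem hh₂) _, by group⟩
  · simp only [List.prod_cons, List.prod_nil, mul_one, commutatorElement_def]
    group

lemma key_main (N : Subgroup G) [hN : N.Normal] (k : ℕ)
    (f g α β : Fin k → G)
    (hf : ∀ i, QuotientGroup.mk' N (f i) = QuotientGroup.mk' N (α i))
    (hg : ∀ i, QuotientGroup.mk' N (g i) = QuotientGroup.mk' N (β i)) :
    IsCommProd N (3 * k) ((List.ofFn fun i => ⁅f i, g i⁆).prod *
        ((List.ofFn fun i => ⁅α i, β i⁆).prod)⁻¹) := by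
  induction k with
  | zero =>
      simp only [List.ofFn_zero, List.prod_nil, mul_one, inv_one]
      exact ⟨fun i => 1, fun i => i.elim0, by simp⟩
  | succ k ih =>
      have IH := ih (fun i => f i.succ) (fun i => g i.succ) (fun i => α i.succ)
        (fun i => β i.succ) (fun i => hf i.succ) (fun i => hg i.succ)
      set A := (List.ofFn fun i : Fin k => ⁅f i.succ, g i.succ⁆).prod
      set B := (List.ofFn fun i : Fin k => ⁅α i.succ, β i.succ⁆).prod
      rw [List.ofFn_succ, List.ofFn_succ, List.prod_cons, List.prod_cons]
      obtain ⟨h₁, hh₁, hf0⟩ := (QuotientGroup.mk'_eq_mk' N).mp (hf 0).symm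
      obtain ⟨h₂, hh₂, hg0⟩ := (QuotientGroup.mk'_eq_mk' N).mp (hg 0).symm
      have e : ⁅f 0, g 0⁆ * A * (⁅α 0, β 0⁆ * B)⁻¹ =
          (⁅f 0, g 0⁆ * ⁅α 0, β 0⁆⁻¹) * (⁅α 0, β 0⁆ * (A * B⁻¹) * ⁅α 0, β 0⁆⁻¹) := by
        group
      rw [e]
      have h3 : IsCommProd N 3 (⁅f 0, g 0⁆ * ⁅α 0, β 0⁆⁻¹) := by
        rw [← hf0, ← hg0]; exact key1 (α 0) (β 0) h₁ h₂ hh₁ hh₂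
      have : 3 * (k + 1) = 3 + 3 * k := by ring
      rw [this]
      exact h3.mul (IH.conj _)


/-- If `q(fᵢ) = q(αᵢ)` and `q(gᵢ) = q(βᵢ)` in `G/N`, then
`[f₁,g₁]⋯[f_k,g_k]·([α₁,β₁]⋯[α_k,β_k])⁻¹ ∈ [G,N]` and its `(G,N)`-commutator
length is at most `3k`. -/
theorem key_lemma_8_4 (N : Subgroup G) [hN : N.Normal] (k : ℕ)
    (f g α β : Fin k → G)
    (hf : ∀ i, QuotientGroup.mk' N (f i) = QuotientGroup.mk' N (α i))
    (hg : ∀ i, QuotientGroup.mk' N (g i) = QuotientGroup.mk' N (β i)) :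
    (List.ofFn fun i => ⁅f i, g i⁆).prod *
        ((List.ofFn fun i => ⁅α i, β i⁆).prod)⁻¹ ∈ ⁅(⊤ : Subgroup G), N⁆ ∧
      clGN N ((List.ofFn fun i => ⁅f i, g i⁆).prod *
        ((List.ofFn fun i => ⁅α i, β i⁆).prod)⁻¹) ≤ 3 * k := by
  have h := key_main N k f g α β hf hg
  exact ⟨h.mem_commutator, Nat.sInf_le h⟩
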